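/- Fix integers d ≥ 2 and r ≥ 1. For 0 ≤ k < r and 1 ≤ m ≤ d−1, consider the n = r(d−1) residue classes m·d^k + d^{k+1}ℤ. Then every integer x with 1 ≤ x ≤ d^r − 1 lies in exactly one of these classes, and an integer x lies in none of them if and only if d^r divides x. In particular these classes cover d^r − 1 consecutive integers. -/

import Mathlib

section Aux

variable {d : ℕ}

/-- Membership in a class forces the exact `d`-adic valuation `k`. -/
lemma ds_key (hd : 2 ≤ d) (x : ℤ) (k m : ℕ) (hm1 : 1 ≤ m) (hm2 : m ≤ d - 1)
    (hdvd : ((d : ℤ) ^ (k + 1)) ∣ x - (m : ℤ) * (d : ℤ) ^ k) :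
    ((d : ℤ) ^ k ∣ x) ∧ ¬ ((d : ℤ) ^ (k + 1)) ∣ x := by
  have hd1 : (1 : ℤ) < (d : ℤ) := by exact_mod_cast hd
  have hdk : (0 : ℤ) < (d : ℤ) ^ k := pow_pos (by linarith) k
  obtain ⟨t, ht⟩ := hdvd
  have hx : x = (m : ℤ) * (d : ℤ) ^ k + (d : ℤ) ^ (k + 1) * t := by linarith
  have hmlt : (m : ℤ) < (d : ℤ) := by
    have : m < d := by omega
    exact_mod_cast this
  have hm0 : (0 : ℤ) < (m : ℤ) := by exact_mod_cast hm1
  constructor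
  · exact ⟨(m : ℤ) + (d : ℤ) * t, by rw [hx]; ring⟩
  · rintro ⟨s, hs⟩
    have hcanc : (d : ℤ) ^ k * (m : ℤ) = (d : ℤ) ^ k * ((d : ℤ) * (s - t)) := by
      rw [hx] at hs
      have : (m : ℤ) * (d : ℤ) ^ k = (d : ℤ) ^ (k + 1) * (s - t) := by linarith
      calc (d : ℤ) ^ k * (m : ℤ) = (m : ℤ) * (d : ℤ) ^ k := by ring
        _ = (d : ℤ) ^ (k + 1) * (s - t) := this
        _ = (d : ℤ) ^ k * ((d : ℤ) * (s - t)) := by ring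
    have hm : (m : ℤ) = (d : ℤ) * (s - t) := mul_left_cancel₀ (ne_of_gt hdk) hcanc
    have hdm : (d : ℤ) ∣ (m : ℤ) := ⟨s - t, hm⟩
    have := Int.le_of_dvd hm0 hdm
    linarith

/-- If `dʳ ∤ x`, some class contains `x`. -/
lemma ds_exists (hd : 2 ≤ d) {r : ℕ} (x : ℤ) (hx : ¬ ((d : ℤ) ^ r) ∣ x) :
    ∃ km : ℕ × ℕ, km.1 < r ∧ 1 ≤ km.2 ∧ km.2 ≤ d - 1 ∧
      ((d : ℤ) ^ (km.1 + 1)) ∣ x - (km.2 : ℤ) * (d : ℤ) ^ km.1 := by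
  have hd1 : (1 : ℤ) < (d : ℤ) := by exact_mod_cast hd
  have hd0 : (0 : ℤ) < (d : ℤ) := by linarith
  have hx0 : x ≠ 0 := by rintro rfl; exact hx (dvd_zero _)
  -- there is some power not dividing x
  have hbdd : ∃ k : ℕ, ¬ ((d : ℤ) ^ k) ∣ x := by
    refine ⟨x.natAbs, fun h => ?_⟩
    have h1 := Int.le_of_dvd (abs_pos.mpr hx0) ((dvd_abs _ _).mpr h)
    have h2 : (x.natAbs : ℤ) < (d : ℤ) ^ x.natAbs := by
      exact_mod_cast Nat.lt_pow_self (n := x.natAbs) (a := d) (by omega)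
    rw [Int.abs_eq_natAbs] at h1
    linarith
  classical
  set k0 := Nat.find hbdd with hk0
  have hk0spec : ¬ ((d : ℤ) ^ k0) ∣ x := Nat.find_spec hbdd
  have hk0pos : 0 < k0 := by
    rcases Nat.eq_zero_or_pos k0 with h | h
    · exfalso; apply hk0spec; rw [h]; simpa using one_dvd x
    · exact h
  set k := k0 - 1 with hk
  have hkk : k + 1 = k0 := by omega
  have hdvdk : ((d : ℤ) ^ k) ∣ x := by
    by_contra h
    have hle : k0 ≤ k := Nat.find_le h
    omega
  have hndvd : ¬ ((d : ℤ) ^ (k + 1)) ∣ x := by rw [hkk]; exact hk0spec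
  -- k < r
  have hklt : k < r := by
    by_contra h
    push_neg at h
    exact hx (dvd_trans (pow_dvd_pow _ h) hdvdk)
  obtain ⟨q, hq⟩ := hdvdk
  have hdq : ¬ ((d : ℤ) ∣ q) := by
    rintro ⟨u, rfl⟩
    exact hndvd ⟨u, by rw [hq]; ring⟩
  set mz := q % (d : ℤ) with hmz
  have hmz0 : 0 ≤ mz := Int.emod_nonneg q (by linarith)
  have hmzlt : mz < (d : ℤ) := Int.emod_lt_of_pos q hd0
  have hmzne : mz ≠ 0 := by
    intro h
    exact hdq (Int.dvd_of_emod_eq_zero h)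
  refine ⟨(k, mz.toNat), hklt, ?_, ?_, ?_⟩
  · simp only
    omega
  · simp only
    have : mz ≤ (d : ℤ) - 1 := by omega
    omega
  · simp only
    have hcast : ((mz.toNat : ℤ)) = mz := Int.toNat_of_nonneg hmz0
    rw [hcast]
    have hdvd : (d : ℤ) ∣ q - mz := Int.dvd_self_sub_of_emod_eq rfl
    obtain ⟨u, hu⟩ := hdvd
    exact ⟨u, by rw [hq, pow_succ]; linear_combination (d:ℤ)^k * hu⟩

end Aux

/-- The regulated filling of a saturated correct degree-system: the classes
`m·dᵏ + dᵏ⁺¹ℤ` (`0 ≤ k < r`, `1 ≤ m ≤ d-1`) cover each `x` with `1 ≤ x ≤ dʳ - 1`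
exactly once, and miss `x` iff `dʳ ∣ x`. -/
theorem degree_system_exact_cover
    (d r : ℕ) (hd : 2 ≤ d) (hr : 1 ≤ r) :
    (∀ x : ℤ, 1 ≤ x → x ≤ (d : ℤ) ^ r - 1 →
      ∃! km : ℕ × ℕ, km.1 < r ∧ 1 ≤ km.2 ∧ km.2 ≤ d - 1 ∧
        ((d : ℤ) ^ (km.1 + 1)) ∣ x - (km.2 : ℤ) * (d : ℤ) ^ km.1) ∧
    (∀ x : ℤ,
      (¬∃ km : ℕ × ℕ, km.1 < r ∧ 1 ≤ km.2 ∧ km.2 ≤ d - 1 ∧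
        ((d : ℤ) ^ (km.1 + 1)) ∣ x - (km.2 : ℤ) * (d : ℤ) ^ km.1) ↔ ((d : ℤ) ^ r) ∣ x) := by
  have hd1 : (1 : ℤ) < (d : ℤ) := by exact_mod_cast hd
  have hd0 : (0 : ℤ) < (d : ℤ) := by linarith
  -- uniqueness lemma
  have uniq : ∀ (x : ℤ) (p q : ℕ × ℕ),
      (p.1 < r ∧ 1 ≤ p.2 ∧ p.2 ≤ d - 1 ∧ ((d : ℤ) ^ (p.1 + 1)) ∣ x - (p.2 : ℤ) * (d : ℤ) ^ p.1) →
      (q.1 < r ∧ 1 ≤ q.2 ∧ q.2 ≤ d - 1 ∧ ((d : ℤ) ^ (q.1 + 1)) ∣ x - (q.2 : ℤ) * (d : ℤ) ^ q.1) →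
      p = q := by
    rintro x ⟨k, m⟩ ⟨k', m'⟩ ⟨hk, hm1, hm2, hdv⟩ ⟨hk', hm1', hm2', hdv'⟩
    obtain ⟨h1, h2⟩ := ds_key hd x k m hm1 hm2 hdv
    obtain ⟨h1', h2'⟩ := ds_key hd x k' m' hm1' hm2' hdv'
    have hkeq : k = k' := by
      rcases lt_trichotomy k k' with h | h | h
      · exact absurd (dvd_trans (pow_dvd_pow _ (by omega : k + 1 ≤ k')) h1') h2
      · exact h
      · exact absurd (dvd_trans (pow_dvd_pow _ (by omega : k' + 1 ≤ k)) h1) h2'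
    subst hkeq
    have hmm : ((d : ℤ) ^ (k + 1)) ∣ ((m' : ℤ) - (m : ℤ)) * (d : ℤ) ^ k := by
      have := dvd_sub hdv hdv'
      have heq : x - (m : ℤ) * (d : ℤ) ^ k - (x - (m' : ℤ) * (d : ℤ) ^ k)
          = ((m' : ℤ) - (m : ℤ)) * (d : ℤ) ^ k := by ring
      rwa [heq] at this
    obtain ⟨t, ht⟩ := hmm
    have hdk : (0 : ℤ) < (d : ℤ) ^ k := pow_pos hd0 k
    have hcanc : (d : ℤ) ^ k * ((m' : ℤ) - (m : ℤ)) = (d : ℤ) ^ k * ((d : ℤ) * t) := by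
      calc (d : ℤ) ^ k * ((m' : ℤ) - (m : ℤ)) = ((m' : ℤ) - (m : ℤ)) * (d : ℤ) ^ k := by ring
        _ = (d : ℤ) ^ (k + 1) * t := ht
        _ = (d : ℤ) ^ k * ((d : ℤ) * t) := by ring
    have heq2 : (m' : ℤ) - (m : ℤ) = (d : ℤ) * t := mul_left_cancel₀ (ne_of_gt hdk) hcanc
    have hdvd : (d : ℤ) ∣ (m' : ℤ) - (m : ℤ) := ⟨t, heq2⟩
    have hmeq : m = m' := by
      have hmd : (m : ℤ) < (d : ℤ) := by exact_mod_cast (by omega : m < d)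
      have hmd' : (m' : ℤ) < (d : ℤ) := by exact_mod_cast (by omega : m' < d)
      have hm0 : (1 : ℤ) ≤ (m : ℤ) := by exact_mod_cast hm1
      have hm0' : (1 : ℤ) ≤ (m' : ℤ) := by exact_mod_cast hm1'
      by_contra hne
      have habs : (m' : ℤ) - (m : ℤ) ≠ 0 := by
        intro h
        exact hne (by exact_mod_cast (by linarith : (m : ℤ) = (m' : ℤ)))
      have := Int.le_of_dvd (abs_pos.mpr habs) ((dvd_abs _ _).mpr hdvd)
      rcases abs_cases ((m' : ℤ) - (m : ℤ)) with ⟨h, _⟩ | ⟨h, _⟩ <;> rw [h] at this <;> linarith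
    simp [hmeq]
  constructor
  · intro x hx1 hx2
    have hnd : ¬ ((d : ℤ) ^ r) ∣ x := by
      intro h
      have := Int.le_of_dvd (by linarith) h
      linarith
    obtain ⟨km, hkm⟩ := ds_exists hd x hnd
    exact ⟨km, hkm, fun q hq => uniq x q km hq hkm⟩
  · intro x
    constructor
    · intro hno
      by_contra h
      exact hno (ds_exists hd x h)
    · rintro hdvd ⟨⟨k, m⟩, hk, hm1, hm2, hdv⟩
      obtain ⟨_, h2⟩ := ds_key hd x k m hm1 hm2 hdv
      exact h2 (dvd_trans (pow_dvd_pow _ (by omega : k + 1 ≤ r)) hdvd)
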